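/- Let q be an integer with q > 2. Then there exists exactly one pair of real numbers (x₁, x₂) with 0 < x₂ < x₁ < π/4 satisfying the two equations tan 2x₁ − (q−2)·cot 2x₁ − cot(2(x₁−x₂)) − cot(2(x₁+x₂)) = 0 and tan 2x₂ − (q−2)·cot 2x₂ − cot(2(x₂−x₁)) − cot(2(x₁+x₂)) = 0. -/

import Mathlib

set_option maxHeartbeats 1600000


open Real

private lemma vieta_aux {s t s0 t0 : ℝ} (hts : t < s) (hts0 : t0 ≤ s0)
    (hsum : s + t = s0 + t0) (hprod : s * t = s0 * t0) : s = s0 ∧ t = t0 := by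
  have h : (s - t - (s0 - t0)) * ((s - t) + (s0 - t0)) = 0 := by
    linear_combination (s + t + s0 + t0) * hsum - 4 * hprod
  rcases mul_eq_zero.mp h with h | h
  · constructor <;> linarith
  · exfalso; linarith

private lemma core_alg (Q ca sa cb sb cu su cv sv : ℝ) (hQ : 3 ≤ Q)
    (h1 : ca ^ 2 + sa ^ 2 = 1) (h2 : cb ^ 2 + sb ^ 2 = 1)
    (hcu : cu = ca * cb + sa * sb) (hsu : su = sa * cb - ca * sb)
    (hcv : cv = ca * cb - sa * sb) (hsv : sv = sa * cb + ca * sb)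
    (hca : 0 < ca) (hsa : 0 < sa) (hcb : 0 < cb) (hsb : 0 < sb) (hsup : 0 < su) :
    (sa / ca - (Q - 2) * (ca / sa) - cu / su - cv / sv = 0 ∧
     sb / cb - (Q - 2) * (cb / sb) + cu / su - cv / sv = 0)
    ↔ (cu = (Real.sqrt 2 + Real.sqrt ((Q - 1) * (Q - 2))) / Real.sqrt (Q * (Q + 1)) ∧
       cv = (Real.sqrt 2 - Real.sqrt ((Q - 1) * (Q - 2))) / Real.sqrt (Q * (Q + 1))) := by
  subst hcu hsu hcv hsv
  have hsvp : 0 < sa * cb + ca * sb := add_pos (mul_pos hsa hcb) (mul_pos hca hsb)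
  have hsasb : (0 : ℝ) < (ca * cb + sa * sb) - (ca * cb - sa * sb) := by
    have h := mul_pos hsa hsb; linarith
  have hcacb : (0 : ℝ) < (ca * cb + sa * sb) + (ca * cb - sa * sb) := by
    have h := mul_pos hca hcb; linarith
  have hQ1 : (0 : ℝ) < Q + 1 := by linarith
  have hQQ : (0 : ℝ) < Q * (Q + 1) := by nlinarith
  have hw0 : (0 : ℝ) ≤ (Q - 1) * (Q - 2) := by nlinarith
  have hsw2 : Real.sqrt ((Q - 1) * (Q - 2)) ^ 2 = (Q - 1) * (Q - 2) := Real.sq_sqrt hw0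
  have h22 : Real.sqrt 2 ^ 2 = 2 := Real.sq_sqrt (by norm_num)
  have hr2 : Real.sqrt (Q * (Q + 1)) ^ 2 = Q * (Q + 1) := Real.sq_sqrt hQQ.le
  have hrpos : 0 < Real.sqrt (Q * (Q + 1)) := Real.sqrt_pos.mpr hQQ
  have hswnn : 0 ≤ Real.sqrt ((Q - 1) * (Q - 2)) := Real.sqrt_nonneg _
  have h2pos : 0 < Real.sqrt 2 := Real.sqrt_pos.mpr (by norm_num)
  -- product and sum of the target values
  have ht0prod : (Real.sqrt 2 + Real.sqrt ((Q - 1) * (Q - 2))) / Real.sqrt (Q * (Q + 1)) *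
      ((Real.sqrt 2 - Real.sqrt ((Q - 1) * (Q - 2))) / Real.sqrt (Q * (Q + 1))) = (3 - Q) / (Q + 1) := by
    rw [div_mul_div_comm, div_eq_div_iff (by positivity) hQ1.ne']
    linear_combination (Q + 1) * h22 - (Q + 1) * hsw2 + (Q - 3) * hr2
  have hσ : (Real.sqrt 2 + Real.sqrt ((Q - 1) * (Q - 2))) / Real.sqrt (Q * (Q + 1)) +
      (Real.sqrt 2 - Real.sqrt ((Q - 1) * (Q - 2))) / Real.sqrt (Q * (Q + 1)) =
      2 * Real.sqrt 2 / Real.sqrt (Q * (Q + 1)) := by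
    rw [← add_div]; congr 1; ring
  have hσ2 : (2 * Real.sqrt 2 / Real.sqrt (Q * (Q + 1))) ^ 2 = 8 / (Q * (Q + 1)) := by
    rw [div_pow, mul_pow, h22, hr2]; norm_num
  have hσpos : 0 < 2 * Real.sqrt 2 / Real.sqrt (Q * (Q + 1)) := by positivity
  have hsasb' : ca * cb - sa * sb < ca * cb + sa * sb := by
    have h := mul_pos hsa hsb; linarith
  have ht0les0 : (Real.sqrt 2 - Real.sqrt ((Q - 1) * (Q - 2))) / Real.sqrt (Q * (Q + 1)) ≤
      (Real.sqrt 2 + Real.sqrt ((Q - 1) * (Q - 2))) / Real.sqrt (Q * (Q + 1)) := by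
    rw [div_le_div_iff₀ hrpos hrpos]
    nlinarith [Real.sqrt_nonneg ((Q - 1) * (Q - 2)), hrpos]
  -- rewrite the equations as vanishing of numerators
  have hden1 : ca * sa * ((sa * cb - ca * sb) * (sa * cb + ca * sb)) ≠ 0 :=
    (mul_pos (mul_pos hca hsa) (mul_pos hsup hsvp)).ne'
  have hden2 : cb * sb * ((sa * cb - ca * sb) * (sa * cb + ca * sb)) ≠ 0 :=
    (mul_pos (mul_pos hcb hsb) (mul_pos hsup hsvp)).ne'
  have e1 : sa / ca - (Q - 2) * (ca / sa) - (ca * cb + sa * sb) / (sa * cb - ca * sb) -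
      (ca * cb - sa * sb) / (sa * cb + ca * sb) =
      (sa ^ 2 * ((sa * cb - ca * sb) * (sa * cb + ca * sb)) -
       (Q - 2) * (ca ^ 2 * ((sa * cb - ca * sb) * (sa * cb + ca * sb))) -
       ca * sa * ((ca * cb + sa * sb) * (sa * cb + ca * sb)) -
       ca * sa * ((sa * cb - ca * sb) * (ca * cb - sa * sb))) /
      (ca * sa * ((sa * cb - ca * sb) * (sa * cb + ca * sb))) := by
    field_simp
  have e2 : sb / cb - (Q - 2) * (cb / sb) + (ca * cb + sa * sb) / (sa * cb - ca * sb) -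
      (ca * cb - sa * sb) / (sa * cb + ca * sb) =
      (sb ^ 2 * ((sa * cb - ca * sb) * (sa * cb + ca * sb)) -
       (Q - 2) * (cb ^ 2 * ((sa * cb - ca * sb) * (sa * cb + ca * sb))) +
       cb * sb * ((ca * cb + sa * sb) * (sa * cb + ca * sb)) -
       cb * sb * ((sa * cb - ca * sb) * (ca * cb - sa * sb))) /
      (cb * sb * ((sa * cb - ca * sb) * (sa * cb + ca * sb))) := by
    have hne : sa * cb - ca * sb ≠ 0 := hsup.ne'
    generalize sa * cb - ca * sb = d at hne ⊢
    field_simp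
  rw [e1, e2, div_eq_zero_iff, div_eq_zero_iff, or_iff_left hden1, or_iff_left hden2]
  constructor
  · rintro ⟨hN1, hN2⟩
    -- sv * F = 0
    have hsvF : (sa * cb + ca * sb) *
        ((1 - (ca * cb + sa * sb) ^ 2) * ((Q - 1) * (ca * cb + sa * sb) + (Q - 3) * (ca * cb - sa * sb)) -
         (ca * cb + sa * sb) * ((ca * cb + sa * sb) ^ 2 - (ca * cb - sa * sb) ^ 2)) = 0 := by
      linear_combination 2 * cb * sb * hN1 - 2 * ca * sa * hN2 -
        ((sa * cb + ca * sb) * ((Q - 1) * (ca * cb + sa * sb) + (Q - 3) * (ca * cb - sa * sb)) * (cb ^ 2 + sb ^ 2)) * h1 -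
        ((sa * cb + ca * sb) * ((Q - 1) * (ca * cb + sa * sb) + (Q - 3) * (ca * cb - sa * sb))) * h2
    have hF : (1 - (ca * cb + sa * sb) ^ 2) * ((Q - 1) * (ca * cb + sa * sb) + (Q - 3) * (ca * cb - sa * sb)) -
        (ca * cb + sa * sb) * ((ca * cb + sa * sb) ^ 2 - (ca * cb - sa * sb) ^ 2) = 0 :=
      (mul_eq_zero.mp hsvF).resolve_left hsvp.ne'
    have hsuG : (sa * cb - ca * sb) *
        ((1 - (ca * cb - sa * sb) ^ 2) * ((3 - Q) * (ca * cb + sa * sb) - (Q - 1) * (ca * cb - sa * sb)) -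
         (ca * cb - sa * sb) * ((ca * cb + sa * sb) ^ 2 - (ca * cb - sa * sb) ^ 2)) = 0 := by
      linear_combination 2 * cb * sb * hN1 + 2 * ca * sa * hN2 -
        ((sa * cb - ca * sb) * ((3 - Q) * (ca * cb + sa * sb) - (Q - 1) * (ca * cb - sa * sb)) * (cb ^ 2 + sb ^ 2)) * h1 -
        ((sa * cb - ca * sb) * ((3 - Q) * (ca * cb + sa * sb) - (Q - 1) * (ca * cb - sa * sb))) * h2
    have hG : (1 - (ca * cb - sa * sb) ^ 2) * ((3 - Q) * (ca * cb + sa * sb) - (Q - 1) * (ca * cb - sa * sb)) -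
        (ca * cb - sa * sb) * ((ca * cb + sa * sb) ^ 2 - (ca * cb - sa * sb) ^ 2) = 0 :=
      (mul_eq_zero.mp hsuG).resolve_left hsup.ne'
    have hDm : ((ca * cb + sa * sb) - (ca * cb - sa * sb)) *
        (Q * ((ca * cb + sa * sb) ^ 2 + (ca * cb - sa * sb) ^ 2) +
         (2 * Q - 2) * ((ca * cb + sa * sb) * (ca * cb - sa * sb)) - 2) = 0 := by
      linear_combination - hF - hG
    have hD : Q * ((ca * cb + sa * sb) ^ 2 + (ca * cb - sa * sb) ^ 2) +
        (2 * Q - 2) * ((ca * cb + sa * sb) * (ca * cb - sa * sb)) - 2 = 0 :=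
      (mul_eq_zero.mp hDm).resolve_left hsasb.ne'
    have hSm : ((ca * cb + sa * sb) + (ca * cb - sa * sb)) *
        (Q * ((ca * cb + sa * sb) ^ 2 + (ca * cb - sa * sb) ^ 2) -
         4 * ((ca * cb + sa * sb) * (ca * cb - sa * sb)) - (2 * Q - 4)) = 0 := by
      linear_combination hG - hF
    have hS : Q * ((ca * cb + sa * sb) ^ 2 + (ca * cb - sa * sb) ^ 2) -
        4 * ((ca * cb + sa * sb) * (ca * cb - sa * sb)) - (2 * Q - 4) = 0 :=
      (mul_eq_zero.mp hSm).resolve_left hcacb.ne'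
    have hprod : (ca * cb + sa * sb) * (ca * cb - sa * sb) = (3 - Q) / (Q + 1) := by
      rw [eq_div_iff hQ1.ne']
      linear_combination (1 / 2) * hD - (1 / 2) * hS
    have hsumsq : ((ca * cb + sa * sb) + (ca * cb - sa * sb)) ^ 2 = 8 / (Q * (Q + 1)) := by
      rw [eq_div_iff hQQ.ne']
      linear_combination (Q + 2) * hD - hS
    -- sum equals σ
    have hsumeq : (ca * cb + sa * sb) + (ca * cb - sa * sb) =
        2 * Real.sqrt 2 / Real.sqrt (Q * (Q + 1)) := by
      have hz : ((ca * cb + sa * sb) + (ca * cb - sa * sb) - 2 * Real.sqrt 2 / Real.sqrt (Q * (Q + 1))) *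
          ((ca * cb + sa * sb) + (ca * cb - sa * sb) + 2 * Real.sqrt 2 / Real.sqrt (Q * (Q + 1))) = 0 := by
        linear_combination hsumsq - hσ2
      rcases mul_eq_zero.mp hz with h | h
      · exact sub_eq_zero.mp h
      · exact absurd h (by exact (add_pos hcacb hσpos).ne')
    have := vieta_aux (s := ca * cb + sa * sb) (t := ca * cb - sa * sb)
      (s0 := (Real.sqrt 2 + Real.sqrt ((Q - 1) * (Q - 2))) / Real.sqrt (Q * (Q + 1)))
      (t0 := (Real.sqrt 2 - Real.sqrt ((Q - 1) * (Q - 2))) / Real.sqrt (Q * (Q + 1)))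
      hsasb'
      ht0les0
      (by rw [hσ]; exact hsumeq)
      (by rw [ht0prod]; exact hprod)
    exact this
  · rintro ⟨hcu0, hcv0⟩
    have hsum' : (ca * cb + sa * sb) + (ca * cb - sa * sb) =
        2 * Real.sqrt 2 / Real.sqrt (Q * (Q + 1)) := by rw [hcu0, hcv0, hσ]
    have hprod' : (ca * cb + sa * sb) * (ca * cb - sa * sb) = (3 - Q) / (Q + 1) := by
      rw [hcu0, hcv0, ht0prod]
    have e1' : ((ca * cb + sa * sb) + (ca * cb - sa * sb)) ^ 2 * (Q * (Q + 1)) = 8 := by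
      rw [hsum', hσ2, div_mul_cancel₀]; exact hQQ.ne'
    have e2' : (ca * cb + sa * sb) * (ca * cb - sa * sb) * (Q + 1) = 3 - Q := by
      rw [hprod', div_mul_cancel₀]; exact hQ1.ne'
    have hDm : (Q * (Q + 1)) * (Q * ((ca * cb + sa * sb) ^ 2 + (ca * cb - sa * sb) ^ 2) +
        (2 * Q - 2) * ((ca * cb + sa * sb) * (ca * cb - sa * sb)) - 2) = 0 := by
      linear_combination Q * e1' - 2 * Q * e2'
    have hD : Q * ((ca * cb + sa * sb) ^ 2 + (ca * cb - sa * sb) ^ 2) +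
        (2 * Q - 2) * ((ca * cb + sa * sb) * (ca * cb - sa * sb)) - 2 = 0 :=
      (mul_eq_zero.mp hDm).resolve_left hQQ.ne'
    have hSm : (Q * (Q + 1)) * (Q * ((ca * cb + sa * sb) ^ 2 + (ca * cb - sa * sb) ^ 2) -
        4 * ((ca * cb + sa * sb) * (ca * cb - sa * sb)) - (2 * Q - 4)) = 0 := by
      linear_combination Q * e1' - (2 * Q + 4) * Q * e2'
    have hS : Q * ((ca * cb + sa * sb) ^ 2 + (ca * cb - sa * sb) ^ 2) -
        4 * ((ca * cb + sa * sb) * (ca * cb - sa * sb)) - (2 * Q - 4) = 0 :=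
      (mul_eq_zero.mp hSm).resolve_left hQQ.ne'
    have hF : (1 - (ca * cb + sa * sb) ^ 2) * ((Q - 1) * (ca * cb + sa * sb) + (Q - 3) * (ca * cb - sa * sb)) -
        (ca * cb + sa * sb) * ((ca * cb + sa * sb) ^ 2 - (ca * cb - sa * sb) ^ 2) = 0 := by
      linear_combination (((ca * cb - sa * sb) - (ca * cb + sa * sb)) / 2) * hD -
        (((ca * cb + sa * sb) + (ca * cb - sa * sb)) / 2) * hS
    have hG : (1 - (ca * cb - sa * sb) ^ 2) * ((3 - Q) * (ca * cb + sa * sb) - (Q - 1) * (ca * cb - sa * sb)) -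
        (ca * cb - sa * sb) * ((ca * cb + sa * sb) ^ 2 - (ca * cb - sa * sb) ^ 2) = 0 := by
      linear_combination (((ca * cb - sa * sb) - (ca * cb + sa * sb)) / 2) * hD +
        (((ca * cb + sa * sb) + (ca * cb - sa * sb)) / 2) * hS
    have hN1m : (4 * (cb * sb)) *
        (sa ^ 2 * ((sa * cb - ca * sb) * (sa * cb + ca * sb)) -
         (Q - 2) * (ca ^ 2 * ((sa * cb - ca * sb) * (sa * cb + ca * sb))) -
         ca * sa * ((ca * cb + sa * sb) * (sa * cb + ca * sb)) -
         ca * sa * ((sa * cb - ca * sb) * (ca * cb - sa * sb))) = 0 := by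
      linear_combination (sa * cb + ca * sb) * hF + (sa * cb - ca * sb) * hG +
        (((sa * cb + ca * sb) * ((Q - 1) * (ca * cb + sa * sb) + (Q - 3) * (ca * cb - sa * sb)) +
          (sa * cb - ca * sb) * ((3 - Q) * (ca * cb + sa * sb) - (Q - 1) * (ca * cb - sa * sb))) *
          (cb ^ 2 + sb ^ 2)) * h1 +
        ((sa * cb + ca * sb) * ((Q - 1) * (ca * cb + sa * sb) + (Q - 3) * (ca * cb - sa * sb)) +
         (sa * cb - ca * sb) * ((3 - Q) * (ca * cb + sa * sb) - (Q - 1) * (ca * cb - sa * sb))) * h2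
    have hN2m : (4 * (ca * sa)) *
        (sb ^ 2 * ((sa * cb - ca * sb) * (sa * cb + ca * sb)) -
         (Q - 2) * (cb ^ 2 * ((sa * cb - ca * sb) * (sa * cb + ca * sb))) +
         cb * sb * ((ca * cb + sa * sb) * (sa * cb + ca * sb)) -
         cb * sb * ((sa * cb - ca * sb) * (ca * cb - sa * sb))) = 0 := by
      linear_combination (sa * cb - ca * sb) * hG - (sa * cb + ca * sb) * hF +
        (((sa * cb - ca * sb) * ((3 - Q) * (ca * cb + sa * sb) - (Q - 1) * (ca * cb - sa * sb)) -
          (sa * cb + ca * sb) * ((Q - 1) * (ca * cb + sa * sb) + (Q - 3) * (ca * cb - sa * sb))) *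
          (cb ^ 2 + sb ^ 2)) * h1 +
        ((sa * cb - ca * sb) * ((3 - Q) * (ca * cb + sa * sb) - (Q - 1) * (ca * cb - sa * sb)) -
         (sa * cb + ca * sb) * ((Q - 1) * (ca * cb + sa * sb) + (Q - 3) * (ca * cb - sa * sb))) * h2
    refine ⟨(mul_eq_zero.mp hN1m).resolve_left ?_, (mul_eq_zero.mp hN2m).resolve_left ?_⟩
    · exact (mul_pos (by norm_num : (0:ℝ) < 4) (mul_pos hcb hsb)).ne'
    · exact (mul_pos (by norm_num : (0:ℝ) < 4) (mul_pos hca hsa)).ne'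

private lemma char_iff (Q x₁ x₂ : ℝ) (hQ : 3 ≤ Q) (h0 : 0 < x₂) (h21 : x₂ < x₁)
    (h14 : x₁ < π / 4) :
    (Real.tan (2 * x₁) - (Q - 2) * Real.cot (2 * x₁) -
        Real.cot (2 * (x₁ - x₂)) - Real.cot (2 * (x₁ + x₂)) = 0 ∧
     Real.tan (2 * x₂) - (Q - 2) * Real.cot (2 * x₂) -
        Real.cot (2 * (x₂ - x₁)) - Real.cot (2 * (x₁ + x₂)) = 0)
    ↔ (Real.cos (2 * x₁ - 2 * x₂) =
        (Real.sqrt 2 + Real.sqrt ((Q - 1) * (Q - 2))) / Real.sqrt (Q * (Q + 1)) ∧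
       Real.cos (2 * x₁ + 2 * x₂) =
        (Real.sqrt 2 - Real.sqrt ((Q - 1) * (Q - 2))) / Real.sqrt (Q * (Q + 1))) := by
  have hpi := Real.pi_pos
  have hca : 0 < Real.cos (2 * x₁) :=
    Real.cos_pos_of_mem_Ioo ⟨by linarith, by linarith⟩
  have hsa : 0 < Real.sin (2 * x₁) :=
    Real.sin_pos_of_pos_of_lt_pi (by linarith) (by linarith)
  have hcb : 0 < Real.cos (2 * x₂) :=
    Real.cos_pos_of_mem_Ioo ⟨by linarith, by linarith⟩
  have hsb : 0 < Real.sin (2 * x₂) :=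
    Real.sin_pos_of_pos_of_lt_pi (by linarith) (by linarith)
  have hsu : 0 < Real.sin (2 * x₁ - 2 * x₂) :=
    Real.sin_pos_of_pos_of_lt_pi (by linarith) (by linarith)
  have r1 : Real.tan (2 * x₁) = Real.sin (2 * x₁) / Real.cos (2 * x₁) :=
    Real.tan_eq_sin_div_cos _
  have r1' : Real.tan (2 * x₂) = Real.sin (2 * x₂) / Real.cos (2 * x₂) :=
    Real.tan_eq_sin_div_cos _
  have r2 : Real.cot (2 * x₁) = Real.cos (2 * x₁) / Real.sin (2 * x₁) :=
    Real.cot_eq_cos_div_sin _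
  have r2' : Real.cot (2 * x₂) = Real.cos (2 * x₂) / Real.sin (2 * x₂) :=
    Real.cot_eq_cos_div_sin _
  have r3 : Real.cot (2 * (x₁ - x₂)) =
      Real.cos (2 * x₁ - 2 * x₂) / Real.sin (2 * x₁ - 2 * x₂) := by
    rw [show (2 : ℝ) * (x₁ - x₂) = 2 * x₁ - 2 * x₂ by ring, Real.cot_eq_cos_div_sin]
  have r4 : Real.cot (2 * (x₁ + x₂)) =
      Real.cos (2 * x₁ + 2 * x₂) / Real.sin (2 * x₁ + 2 * x₂) := by
    rw [show (2 : ℝ) * (x₁ + x₂) = 2 * x₁ + 2 * x₂ by ring, Real.cot_eq_cos_div_sin]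
  have r5 : Real.cot (2 * (x₂ - x₁)) =
      -(Real.cos (2 * x₁ - 2 * x₂) / Real.sin (2 * x₁ - 2 * x₂)) := by
    rw [show (2 : ℝ) * (x₂ - x₁) = -(2 * x₁ - 2 * x₂) by ring, Real.cot_eq_cos_div_sin,
      Real.cos_neg, Real.sin_neg, div_neg]
  rw [r1, r1', r2, r2', r3, r4, r5, sub_neg_eq_add]
  exact core_alg Q (Real.cos (2 * x₁)) (Real.sin (2 * x₁)) (Real.cos (2 * x₂))
    (Real.sin (2 * x₂)) (Real.cos (2 * x₁ - 2 * x₂)) (Real.sin (2 * x₁ - 2 * x₂))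
    (Real.cos (2 * x₁ + 2 * x₂)) (Real.sin (2 * x₁ + 2 * x₂)) hQ
    (Real.cos_sq_add_sin_sq _) (Real.cos_sq_add_sin_sq _)
    (Real.cos_sub _ _) (Real.sin_sub _ _) (Real.cos_add _ _) (Real.sin_add _ _)
    hca hsa hcb hsb hsu

/-- For every integer `q > 2` there is exactly one pair `(x₁, x₂)` with
`0 < x₂ < x₁ < π/4` satisfying
`tan 2x₁ - (q-2) cot 2x₁ - cot(2(x₁-x₂)) - cot(2(x₁+x₂)) = 0` and
`tan 2x₂ - (q-2) cot 2x₂ - cot(2(x₂-x₁)) - cot(2(x₁+x₂)) = 0`. -/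
theorem stmt_16 (q : ℤ) (hq : 2 < q) :
    ∃! p : ℝ × ℝ, (0 < p.2 ∧ p.2 < p.1 ∧ p.1 < π / 4) ∧
      Real.tan (2 * p.1) - ((q : ℝ) - 2) * Real.cot (2 * p.1) -
        Real.cot (2 * (p.1 - p.2)) - Real.cot (2 * (p.1 + p.2)) = 0 ∧
      Real.tan (2 * p.2) - ((q : ℝ) - 2) * Real.cot (2 * p.2) -
        Real.cot (2 * (p.2 - p.1)) - Real.cot (2 * (p.1 + p.2)) = 0 := by
  have hpi := Real.pi_pos
  set Q : ℝ := (q : ℝ) with hQdef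
  have hQ : 3 ≤ Q := by
    have h3 : (3 : ℤ) ≤ q := hq
    rw [hQdef]
    exact_mod_cast h3
  have hQ1 : (0 : ℝ) < Q + 1 := by linarith
  have hQQ : (0 : ℝ) < Q * (Q + 1) := by nlinarith
  have hw0 : (0 : ℝ) ≤ (Q - 1) * (Q - 2) := by nlinarith
  have hwpos : (0 : ℝ) < (Q - 1) * (Q - 2) := by nlinarith
  have hsw2 : Real.sqrt ((Q - 1) * (Q - 2)) ^ 2 = (Q - 1) * (Q - 2) := Real.sq_sqrt hw0
  have h22 : Real.sqrt 2 ^ 2 = 2 := Real.sq_sqrt (by norm_num)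
  have hr2 : Real.sqrt (Q * (Q + 1)) ^ 2 = Q * (Q + 1) := Real.sq_sqrt hQQ.le
  have hrpos : 0 < Real.sqrt (Q * (Q + 1)) := Real.sqrt_pos.mpr hQQ
  have hswpos : 0 < Real.sqrt ((Q - 1) * (Q - 2)) := Real.sqrt_pos.mpr hwpos
  have h2pos : 0 < Real.sqrt 2 := Real.sqrt_pos.mpr (by norm_num)
  set s0 : ℝ := (Real.sqrt 2 + Real.sqrt ((Q - 1) * (Q - 2))) / Real.sqrt (Q * (Q + 1)) with hs0def
  set t0 : ℝ := (Real.sqrt 2 - Real.sqrt ((Q - 1) * (Q - 2))) / Real.sqrt (Q * (Q + 1)) with ht0def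
  have hs0pos : 0 < s0 := div_pos (by linarith) hrpos
  have hs0lt1 : s0 < 1 := by
    rw [hs0def, div_lt_one hrpos]
    have h2w : Real.sqrt 2 * Real.sqrt ((Q - 1) * (Q - 2)) < 2 * (Q - 1) := by
      rw [← Real.sqrt_mul (by norm_num : (0:ℝ) ≤ 2)]
      exact (Real.sqrt_lt' (by linarith)).mpr (by nlinarith)
    have hnn : (0:ℝ) ≤ Real.sqrt 2 + Real.sqrt ((Q - 1) * (Q - 2)) := by linarith
    exact (Real.lt_sqrt hnn).mpr (by nlinarith)
  have hts0 : t0 < s0 := by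
    rw [hs0def, ht0def, div_lt_div_iff₀ hrpos hrpos]
    nlinarith
  have hst0pos : 0 < s0 + t0 := by
    rw [hs0def, ht0def, ← add_div]
    exact div_pos (by linarith) hrpos
  have ht0gt : -1 < t0 := by nlinarith
  have ht0lt1 : t0 < 1 := by linarith
  set u : ℝ := Real.arccos s0 with hudef
  set v : ℝ := Real.arccos t0 with hvdef
  have hu0 : 0 < u := Real.arccos_pos.mpr hs0lt1
  have hunn : 0 ≤ u := hu0.le
  have huπ : u ≤ π := Real.arccos_le_pi _
  have hvnn : 0 ≤ v := Real.arccos_nonneg _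
  have hvπ : v ≤ π := Real.arccos_le_pi _
  have hcosu : Real.cos u = s0 := Real.cos_arccos (by linarith) hs0lt1.le
  have hcosv : Real.cos v = t0 := Real.cos_arccos ht0gt.le ht0lt1.le
  have huv : u < v := by
    have := Real.strictAntiOn_cos.lt_iff_gt (Set.mem_Icc.mpr ⟨hvnn, hvπ⟩) (Set.mem_Icc.mpr ⟨hunn, huπ⟩)
    rw [hcosu, hcosv] at this
    exact this.mp hts0
  have hsumuv : u + v < π := by
    have hmem : π - u ∈ Set.Icc (0:ℝ) π := ⟨by linarith, by linarith⟩
    have h' := Real.strictAntiOn_cos.lt_iff_gt hmem (Set.mem_Icc.mpr ⟨hvnn, hvπ⟩)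
    rw [Real.cos_pi_sub, hcosu, hcosv] at h'
    have : v < π - u := h'.mp (by linarith)
    linarith
  refine ⟨((u + v) / 4, (v - u) / 4), ⟨⟨show (0:ℝ) < (v - u) / 4 by linarith,
    show (v - u) / 4 < (u + v) / 4 by linarith, show (u + v) / 4 < π / 4 by linarith⟩, ?_⟩, ?_⟩
  · refine (char_iff Q ((u + v) / 4) ((v - u) / 4) hQ (by linarith) (by linarith)
      (by linarith)).mpr ⟨?_, ?_⟩
    · rw [show 2 * ((u + v) / 4) - 2 * ((v - u) / 4) = u by ring]
      exact hcosu
    · rw [show 2 * ((u + v) / 4) + 2 * ((v - u) / 4) = v by ring]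
      exact hcosv
  · rintro ⟨y₁, y₂⟩ ⟨⟨hy0, hy21, hy14⟩, hE1, hE2⟩
    simp only at hy0 hy21 hy14 hE1 hE2
    obtain ⟨hc1, hc2⟩ := (char_iff Q y₁ y₂ hQ hy0 hy21 hy14).mp ⟨hE1, hE2⟩
    have h1u : 2 * y₁ - 2 * y₂ = u := by
      rw [hudef, hs0def, ← hc1]
      exact (Real.arccos_cos (by linarith) (by linarith)).symm
    have h2v : 2 * y₁ + 2 * y₂ = v := by
      rw [hvdef, ht0def, ← hc2]
      exact (Real.arccos_cos (by linarith) (by linarith)).symm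
    have : y₁ = (u + v) / 4 := by linarith
    have : y₂ = (v - u) / 4 := by linarith
    simp only [Prod.mk.injEq]
    constructor <;> linarith
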